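/- If the number of leaves Z of a sesqui-type Galton–Watson tree T (blue offspring distribution (ξ,ζ), E[ξ]=1, finite exponential moments) has probability generating function Z(z) = E[z^Z] and f(z,w) = E[z^ξ w^ζ], then Z(z) = P((ξ,ζ)=(0,0))·(z-1) + f(Z(z), z) for all z ∈ [0,1]. -/

import Mathlib

open MeasureTheory ProbabilityTheory

/-- Ulam–Harris genealogy of a sesqui-type Galton–Watson tree: `X v ω` is the pair
(number of blue children, number of red children) of the potential blue vertex `v`;
`Alive X v ω` says that the blue vertex `v` belongs to the tree. -/
def Alive {Ω : Type*} (X : List ℕ → Ω → ℕ × ℕ) : List ℕ → Ω → Prop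
  | [], _ => True
  | i :: v, ω => Alive X v ω ∧ i < (X v ω).1

/-- The number of leaves of the tree: blue vertices with no offspring at all,
plus all red vertices (red vertices are infertile, hence leaves). -/
noncomputable def leafCount {Ω : Type*} (X : List ℕ → Ω → ℕ × ℕ) (ω : Ω) : ℕ :=
  Nat.card {v : List ℕ // Alive X v ω ∧ X v ω = (0, 0)} +
    Nat.card {p : List ℕ × ℕ // Alive X p.1 ω ∧ p.2 < (X p.1 ω).2}

namespace GWaux


abbrev Cfg := List ℕ → ℕ × ℕ

/-- canonical coordinate family on configuration space -/
def E : List ℕ → Cfg → ℕ × ℕ := fun v x => x v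

variable {Ω Ω' : Type*}

lemma alive_congr {X : List ℕ → Ω → ℕ × ℕ} {X' : List ℕ → Ω' → ℕ × ℕ} {ω : Ω} {ω' : Ω'}
    (h : ∀ u, X u ω = X' u ω') : ∀ v, Alive X v ω ↔ Alive X' v ω'
  | [] => Iff.rfl
  | i :: v => by simp only [Alive, alive_congr h v, h v]

lemma leafCount_congr {X : List ℕ → Ω → ℕ × ℕ} {X' : List ℕ → Ω' → ℕ × ℕ} {ω : Ω} {ω' : Ω'}
    (h : ∀ u, X u ω = X' u ω') : leafCount X ω = leafCount X' ω' := by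
  unfold leafCount
  congr 1
  · exact Nat.card_congr (Equiv.subtypeEquiv (Equiv.refl _)
      (fun v => by simp [alive_congr h, h]))
  · exact Nat.card_congr (Equiv.subtypeEquiv (Equiv.refl _)
      (fun p => by simp [alive_congr h, h]))

lemma leafCount_fam (X : List ℕ → Ω → ℕ × ℕ) (ω : Ω) :
    leafCount X ω = leafCount E (fun v => X v ω) :=
  leafCount_congr (fun _ => rfl)

lemma measurableSet_alive : ∀ v, MeasurableSet {x : Cfg | Alive E v x}
  | [] => by simp [Alive]
  | i :: v => by
      have h1 : {x : Cfg | Alive E (i :: v) x}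
          = {x : Cfg | Alive E v x} ∩ (fun x : Cfg => x v) ⁻¹' {p | i < p.1} := rfl
      rw [h1]
      exact (measurableSet_alive v).inter
        ((measurable_pi_apply v) ((Set.to_countable _).measurableSet))

/-- measurability of counting functions -/
lemma measurable_natCard {α : Type*} [Countable α] [MeasurableSpace Ω']
    (S : α → Set Ω') (hS : ∀ a, MeasurableSet (S a)) :
    Measurable (fun x => Nat.card {a : α // x ∈ S a}) := by
  have key : ∀ n : ℕ, n ≠ 0 → (fun x => Nat.card {a : α // x ∈ S a}) ⁻¹' {n}
      = ⋃ (F : {F : Finset α // F.card = n}),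
        (⋂ a ∈ (F : Finset α), S a) ∩ (⋂ (a : α) (_ : a ∉ (F : Finset α)), (S a)ᶜ) := by
    intro n hn
    ext x
    simp only [Set.mem_preimage, Set.mem_singleton_iff, Set.mem_iUnion, Set.mem_inter_iff,
      Set.mem_iInter, Set.mem_compl_iff]
    constructor
    · intro h
      have hfin : Set.Finite {a | x ∈ S a} := by
        by_contra hinf
        have hinf' : Set.Infinite {a | x ∈ S a} := hinf
        rw [show {a : α // x ∈ S a} = ↥{a | x ∈ S a} from rfl] at h
        rw [Nat.card_coe_set_eq, hinf'.ncard] at h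
        exact hn h.symm
      refine ⟨⟨hfin.toFinset, ?_⟩, fun a ha => by simpa using ha, fun a ha => by simpa using ha⟩
      rw [show {a : α // x ∈ S a} = ↥{a | x ∈ S a} from rfl, Nat.card_coe_set_eq] at h
      rw [← h, Set.ncard_eq_toFinset_card _ hfin]
    · rintro ⟨⟨F, hF⟩, h1, h2⟩
      have : {a | x ∈ S a} = ↑F := by
        ext a; constructor
        · intro ha; by_contra hc; exact h2 a hc ha
        · exact fun ha => h1 a ha
      rw [show {a : α // x ∈ S a} = ↥{a | x ∈ S a} from rfl, Nat.card_coe_set_eq, this,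
        Set.ncard_coe_finset, hF]
  have hmeas : ∀ n : ℕ, n ≠ 0 → MeasurableSet ((fun x => Nat.card {a : α // x ∈ S a}) ⁻¹' {n}) := by
    intro n hn
    rw [key n hn]
    exact MeasurableSet.iUnion (fun F =>
      ((MeasurableSet.biInter (Set.to_countable _) (fun a _ => hS a)).inter
        (MeasurableSet.iInter (fun a => MeasurableSet.iInter (fun _ => (hS a).compl)))))
  apply measurable_to_countable'
  intro n
  rcases eq_or_ne n 0 with rfl | hn
  · have : (fun x => Nat.card {a : α // x ∈ S a}) ⁻¹' {0}
        = (⋃ (n : {n : ℕ // n ≠ 0}), (fun x => Nat.card {a : α // x ∈ S a}) ⁻¹' {(n : ℕ)})ᶜ := by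
      ext x
      simp only [Set.mem_preimage, Set.mem_singleton_iff, Set.mem_compl_iff, Set.mem_iUnion]
      constructor
      · rintro h ⟨⟨m, hm⟩, hx⟩; exact hm (hx.symm.trans h)
      · intro h; by_contra hc; exact h ⟨⟨_, hc⟩, rfl⟩
    rw [this]
    exact (MeasurableSet.iUnion (fun (n : {n : ℕ // n ≠ 0}) => hmeas n n.2)).compl
  · exact hmeas n hn

lemma measurable_leafCountE : Measurable (leafCount E) := by
  unfold leafCount
  apply Measurable.add
  · exact measurable_natCard (fun v => {x : Cfg | Alive E v x ∧ E v x = (0,0)})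
      (fun v => (measurableSet_alive v).inter
        (show MeasurableSet ((fun x : Cfg => x v) ⁻¹' {(0,0)}) from
          (measurable_pi_apply v) ((Set.to_countable _).measurableSet)))
  · exact measurable_natCard (fun p : List ℕ × ℕ => {x : Cfg | Alive E p.1 x ∧ p.2 < (E p.1 x).2})
      (fun p => (measurableSet_alive p.1).inter
        (show MeasurableSet ((fun x : Cfg => x p.1) ⁻¹' {q : ℕ × ℕ | p.2 < q.2}) from
          (measurable_pi_apply p.1) ((Set.to_countable _).measurableSet)))



variable {Ω : Type*}

/-- subtree family rooted at child `i` -/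
def sub (X : List ℕ → Ω → ℕ × ℕ) (i : ℕ) : List ℕ → Ω → ℕ × ℕ := fun u ω => X (u ++ [i]) ω

lemma alive_append {X : List ℕ → Ω → ℕ × ℕ} {ω : Ω} {i : ℕ} :
    ∀ u, Alive X (u ++ [i]) ω ↔ i < (X [] ω).1 ∧ Alive (sub X i) u ω
  | [] => by simp [Alive, sub]
  | j :: u => by
      rw [List.cons_append]
      show Alive X (u ++ [i]) ω ∧ j < (X (u ++ [i]) ω).1 ↔ _
      rw [alive_append u]
      show _ ↔ _ ∧ Alive (sub X i) u ω ∧ j < (sub X i u ω).1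
      tauto

def TreeFinite (X : List ℕ → Ω → ℕ × ℕ) (ω : Ω) : Prop := {v | Alive X v ω}.Finite

lemma treeFinite_sub {X : List ℕ → Ω → ℕ × ℕ} {ω : Ω} {i : ℕ}
    (hfin : TreeFinite X ω) (hi : i < (X [] ω).1) : TreeFinite (sub X i) ω := by
  have h : {u | Alive (sub X i) u ω} ⊆ (fun u : List ℕ => u ++ [i]) ⁻¹' {v | Alive X v ω} := by
    intro u hu
    exact (alive_append u).2 ⟨hi, hu⟩
  exact (hfin.preimage (fun a _ b _ h => by
    simpa [← List.concat_eq_append, List.concat_inj] using h)).subset h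

/-- blue leaf set -/
def Bset (X : List ℕ → Ω → ℕ × ℕ) (ω : Ω) : Set (List ℕ) :=
  {v | Alive X v ω ∧ X v ω = (0, 0)}

/-- red leaf set -/
def Rset (X : List ℕ → Ω → ℕ × ℕ) (ω : Ω) : Set (List ℕ × ℕ) :=
  {p | Alive X p.1 ω ∧ p.2 < (X p.1 ω).2}

lemma bset_finite {X : List ℕ → Ω → ℕ × ℕ} {ω : Ω} (hfin : TreeFinite X ω) :
    (Bset X ω).Finite := hfin.subset (fun v hv => hv.1)

lemma rset_finite {X : List ℕ → Ω → ℕ × ℕ} {ω : Ω} (hfin : TreeFinite X ω) :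
    (Rset X ω).Finite := by
  have h : Rset X ω ⊆ ⋃ v ∈ {v | Alive X v ω}, ({v} : Set (List ℕ)) ×ˢ Set.Iio (X v ω).2 := by
    rintro ⟨v, k⟩ hv
    exact Set.mem_biUnion hv.1 (by exact ⟨rfl, hv.2⟩)
  exact ((hfin.biUnion (fun v _ => (Set.finite_singleton v).prod (Set.finite_Iio _))).subset h)

lemma leafCount_eq_ncard (X : List ℕ → Ω → ℕ × ℕ) (ω : Ω) :
    leafCount X ω = (Bset X ω).ncard + (Rset X ω).ncard := by
  unfold leafCount Bset Rset
  rw [← Nat.card_coe_set_eq, ← Nat.card_coe_set_eq]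
  rfl

lemma iio_succ_insert (n : ℕ) : Set.Iio (n + 1) = insert n (Set.Iio n) := by
  ext m; simp only [Set.mem_Iio, Set.mem_insert_iff]; omega

lemma ncard_biUnion_range {α : Type*} (S : ℕ → Set α) (n : ℕ) (hfin : ∀ i < n, (S i).Finite)
    (hdisj : ∀ i j, i < n → j < n → i ≠ j → Disjoint (S i) (S j)) :
    (⋃ i ∈ Set.Iio n, S i).ncard = ∑ i ∈ Finset.range n, (S i).ncard := by
  induction n with
  | zero => simp
  | succ n ih =>
      have hUfin : (⋃ i ∈ Set.Iio n, S i).Finite :=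
        Set.Finite.biUnion (Set.finite_Iio n) (fun i hi => hfin i (by simp at hi; omega))
      have hdisj' : Disjoint (S n) (⋃ i ∈ Set.Iio n, S i) := by
        rw [Set.disjoint_iUnion_right]
        intro i
        rw [Set.disjoint_iUnion_right]
        intro hi
        simp only [Set.mem_Iio] at hi
        exact hdisj n i (by omega) (by omega) (by omega)
      rw [iio_succ_insert, Set.biUnion_insert, Finset.range_add_one,
        Finset.sum_insert (by simp),
        Set.ncard_union_eq hdisj' (hfin n (by omega)) hUfin,
        ih (fun i hi => hfin i (by omega)) (fun i j hi hj => hdisj i j (by omega) (by omega))]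

lemma bset_decomp (X : List ℕ → Ω → ℕ × ℕ) (ω : Ω) :
    Bset X ω = {v | v = ([] : List ℕ) ∧ X [] ω = (0, 0)} ∪
      ⋃ i ∈ Set.Iio (X [] ω).1, (fun u : List ℕ => u ++ [i]) '' Bset (sub X i) ω := by
  ext v
  constructor
  · rintro ⟨hal, hv⟩
    rcases List.eq_nil_or_concat v with rfl | ⟨u, i, rfl⟩
    · exact Or.inl ⟨rfl, hv⟩
    · right
      rw [List.concat_eq_append] at *
      obtain ⟨hi, hu⟩ := (alive_append u).1 hal
      exact Set.mem_biUnion (by simpa using hi) ⟨u, ⟨hu, hv⟩, rfl⟩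
  · rintro (⟨rfl, h⟩ | hv)
    · exact ⟨trivial, h⟩
    · simp only [Set.mem_iUnion, Finset.mem_range] at hv
      obtain ⟨i, hi, u, ⟨hu, huv⟩, rfl⟩ := hv
      exact ⟨(alive_append u).2 ⟨hi, hu⟩, huv⟩

lemma rset_decomp (X : List ℕ → Ω → ℕ × ℕ) (ω : Ω) :
    Rset X ω = (fun k => (([] : List ℕ), k)) '' Set.Iio (X [] ω).2 ∪
      ⋃ i ∈ Set.Iio (X [] ω).1,
        (fun p : List ℕ × ℕ => (p.1 ++ [i], p.2)) '' Rset (sub X i) ω := by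
  ext ⟨v, k⟩
  constructor
  · rintro ⟨hal, hv⟩
    rcases List.eq_nil_or_concat v with rfl | ⟨u, i, rfl⟩
    · exact Or.inl ⟨k, hv, rfl⟩
    · right
      rw [List.concat_eq_append] at *
      obtain ⟨hi, hu⟩ := (alive_append u).1 hal
      exact Set.mem_biUnion (by simpa using hi) ⟨(u, k), ⟨hu, hv⟩, rfl⟩
  · rintro (⟨m, hm, hmk⟩ | hv)
    · obtain ⟨rfl, rfl⟩ := Prod.mk.injEq .. ▸ hmk
      exact ⟨trivial, by simpa using hm⟩
    · simp only [Set.mem_iUnion, Finset.mem_range] at hv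
      obtain ⟨i, hi, ⟨u, m⟩, ⟨hu, hum⟩, heq⟩ := hv
      obtain ⟨rfl, rfl⟩ := Prod.mk.injEq .. ▸ heq
      exact ⟨(alive_append u).2 ⟨hi, hu⟩, hum⟩

lemma leafCount_decomp {X : List ℕ → Ω → ℕ × ℕ} {ω : Ω} (hfin : TreeFinite X ω) :
    leafCount X ω = (if X [] ω = (0, 0) then 1 else 0) + (X [] ω).2 +
      ∑ i ∈ Finset.range (X [] ω).1, leafCount (sub X i) ω := by
  have happ : ∀ i : ℕ, Function.Injective (fun u : List ℕ => u ++ [i]) := by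
    intro i a b h
    simpa [← List.concat_eq_append, List.concat_inj] using h
  have happ2 : ∀ i : ℕ, Function.Injective (fun p : List ℕ × ℕ => (p.1 ++ [i], p.2)) := by
    rintro i ⟨a, m⟩ ⟨b, m'⟩ h
    simp only [Prod.mk.injEq] at h
    obtain ⟨h1, rfl⟩ := h
    rw [happ i h1]
  have hsubfin : ∀ i, i < (X [] ω).1 → TreeFinite (sub X i) ω := by
    intro i hi
    exact treeFinite_sub hfin hi
  -- blue part
  have hb : (Bset X ω).ncard = (if X [] ω = (0, 0) then 1 else 0) +
      ∑ i ∈ Finset.range (X [] ω).1, (Bset (sub X i) ω).ncard := by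
    rw [bset_decomp]
    rw [Set.ncard_union_eq ?disj ?f1 ?f2]
    case disj =>
      rw [Set.disjoint_iUnion_right]; intro i; rw [Set.disjoint_iUnion_right]; intro _
      rw [Set.disjoint_left]
      rintro v ⟨rfl, -⟩ ⟨u, -, h⟩
      exact (List.concat_ne_nil i u) h
    case f1 => exact (Set.finite_singleton ([] : List ℕ)).subset (fun v hv => hv.1)
    case f2 =>
      exact Set.Finite.biUnion (Set.finite_Iio _)
        (fun i hi => ((bset_finite (hsubfin i hi)).image _))
    congr 1
    · by_cases h : X [] ω = (0, 0)
      · rw [if_pos h]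
        have : {v | v = ([] : List ℕ) ∧ X [] ω = (0, 0)} = {([] : List ℕ)} := by
          ext v; simp only [Set.mem_setOf_eq, Set.mem_singleton_iff, and_iff_left h]
        rw [this, Set.ncard_singleton]
      · rw [if_neg h]
        have : {v | v = ([] : List ℕ) ∧ X [] ω = (0, 0)} = (∅ : Set (List ℕ)) := by
          ext v; simp only [Set.mem_setOf_eq, Set.mem_empty_iff_false, iff_false, not_and]
          exact fun _ => h
        rw [this, Set.ncard_empty]
    · rw [ncard_biUnion_range (fun i => (fun u : List ℕ => u ++ [i]) '' Bset (sub X i) ω)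
        (X [] ω).1 (fun i hi => (bset_finite (hsubfin i hi)).image _) ?_]
      · exact Finset.sum_congr rfl (fun i _ => Set.ncard_image_of_injective _ (happ i))
      · intro i j _ _ hij
        rw [Set.disjoint_left]
        rintro v ⟨u, -, rfl⟩ ⟨u', -, h⟩
        simp only [← List.concat_eq_append, List.concat_inj] at h
        exact hij (h.2.symm)
  -- red part
  have hr : (Rset X ω).ncard = (X [] ω).2 +
      ∑ i ∈ Finset.range (X [] ω).1, (Rset (sub X i) ω).ncard := by
    rw [rset_decomp]
    rw [Set.ncard_union_eq ?disj ?f1 ?f2]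
    case disj =>
      rw [Set.disjoint_iUnion_right]; intro i; rw [Set.disjoint_iUnion_right]; intro _
      rw [Set.disjoint_left]
      rintro p ⟨m, -, rfl⟩ ⟨⟨u, m'⟩, -, h⟩
      have := congrArg Prod.fst h
      exact (List.concat_ne_nil i u) (by simpa [List.concat_eq_append] using this)
    case f1 => exact (Set.finite_Iio _).image _
    case f2 =>
      exact Set.Finite.biUnion (Set.finite_Iio _)
        (fun i hi => ((rset_finite (hsubfin i hi)).image _))
    congr 1
    · rw [Set.ncard_image_of_injective _ (fun a b h => (Prod.mk.injEq .. ▸ h).2)]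
      rw [← Finset.coe_range, Set.ncard_coe_finset, Finset.card_range]
    · rw [ncard_biUnion_range (fun i => (fun p : List ℕ × ℕ => (p.1 ++ [i], p.2)) ''
          Rset (sub X i) ω)
        (X [] ω).1 (fun i hi => (rset_finite (hsubfin i hi)).image _) ?_]
      · exact Finset.sum_congr rfl (fun i _ => Set.ncard_image_of_injective _ (happ2 i))
      · intro i j _ _ hij
        rw [Set.disjoint_left]
        rintro p ⟨u, -, rfl⟩ ⟨u', -, h⟩
        have := congrArg Prod.fst h
        simp only [← List.concat_eq_append, List.concat_inj] at this
        exact hij this.2.symm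
  rw [leafCount_eq_ncard, hb, hr]
  have : ∀ i ∈ Finset.range (X [] ω).1, leafCount (sub X i) ω
      = (Bset (sub X i) ω).ncard + (Rset (sub X i) ω).ncard :=
    fun i _ => leafCount_eq_ncard _ _
  rw [Finset.sum_congr rfl this, Finset.sum_add_distrib]
  ring



section Measure

variable {Ω : Type*} [MeasurableSpace Ω] {μ : Measure Ω} [IsProbabilityMeasure μ]
variable {X : List ℕ → Ω → ℕ × ℕ}

/-- the full configuration map -/
def fam (X : List ℕ → Ω → ℕ × ℕ) : Ω → Cfg := fun ω v => X v ω

lemma measurable_fam (hmeas : ∀ v, Measurable (X v)) : Measurable (fam X) :=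
  measurable_pi_lambda _ hmeas

/-- point cylinders -/
def Cyls : Set (Set Cfg) :=
  {S | ∃ (F : Finset (List ℕ)) (y : List ℕ → ℕ × ℕ), S = {x : Cfg | ∀ v ∈ F, x v = y v}}

lemma isPiSystem_Cyls : IsPiSystem Cyls := by
  rintro S ⟨F, y, rfl⟩ T ⟨G, w, rfl⟩ hne
  obtain ⟨x, hx⟩ := hne
  refine ⟨F ∪ G, x, ?_⟩
  ext u
  simp only [Set.mem_inter_iff, Set.mem_setOf_eq, Finset.mem_union]
  constructor
  · rintro ⟨h1, h2⟩ v hv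
    rcases hv with hv | hv
    · rw [h1 v hv, ← hx.1 v hv]
    · rw [h2 v hv, ← hx.2 v hv]
  · intro h
    exact ⟨fun v hv => (h v (Or.inl hv)).trans (hx.1 v hv),
      fun v hv => (h v (Or.inr hv)).trans (hx.2 v hv)⟩

lemma measurableSet_cyl (F : Finset (List ℕ)) (y : List ℕ → ℕ × ℕ) :
    MeasurableSet {x : Cfg | ∀ v ∈ F, x v = y v} := by
  have : {x : Cfg | ∀ v ∈ F, x v = y v} = ⋂ v ∈ F, (fun x : Cfg => x v) ⁻¹' {y v} := by
    ext x; simp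
  rw [this]
  exact MeasurableSet.biInter (F : Set (List ℕ)).to_countable
    (fun v _ => (measurable_pi_apply v) (measurableSet_singleton _))

lemma generateFrom_Cyls :
    (inferInstance : MeasurableSpace Cfg) = MeasurableSpace.generateFrom Cyls := by
  apply le_antisymm
  · rw [show (inferInstance : MeasurableSpace Cfg) = MeasurableSpace.pi from rfl,
      MeasurableSpace.pi]
    apply iSup_le
    intro v
    intro s hs
    obtain ⟨t, -, rfl⟩ := hs
    have h : (fun x : Cfg => x v) ⁻¹' t
        = ⋃ p ∈ t, {x : Cfg | ∀ w ∈ ({v} : Finset (List ℕ)), x w = (fun _ => p) w} := by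
      ext x; simp
    rw [h]
    exact MeasurableSet.biUnion t.to_countable
      (fun p _ => MeasurableSpace.measurableSet_generateFrom ⟨{v}, fun _ => p, rfl⟩)
  · apply MeasurableSpace.generateFrom_le
    rintro S ⟨F, y, rfl⟩
    exact measurableSet_cyl F y

/-- two independent families with equal marginals have equal joint laws -/
lemma map_fam_eq {Y Z : List ℕ → Ω → ℕ × ℕ}
    (hYm : ∀ v, Measurable (Y v)) (hZm : ∀ v, Measurable (Z v))
    (hY : iIndepFun Y μ)
    (hZ : iIndepFun Z μ)
    (hmarg : ∀ v, μ.map (Y v) = μ.map (Z v)) :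
    μ.map (fam Y) = μ.map (fam Z) := by
  have h1 : IsProbabilityMeasure (μ.map (fam Y)) :=
    Measure.isProbabilityMeasure_map (measurable_fam hYm).aemeasurable
  have h2 : IsProbabilityMeasure (μ.map (fam Z)) :=
    Measure.isProbabilityMeasure_map (measurable_fam hZm).aemeasurable
  refine ext_of_generate_finite Cyls generateFrom_Cyls isPiSystem_Cyls ?_
    (by rw [h1.measure_univ, h2.measure_univ])
  rintro S ⟨F, y, rfl⟩
  rw [Measure.map_apply (measurable_fam hYm) (measurableSet_cyl F y),
    Measure.map_apply (measurable_fam hZm) (measurableSet_cyl F y)]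
  have hpre : ∀ (W : List ℕ → Ω → ℕ × ℕ),
      fam W ⁻¹' {x : Cfg | ∀ v ∈ F, x v = y v} = ⋂ v ∈ F, W v ⁻¹' {y v} := by
    intro W; ext ω; simp [fam]
  rw [hpre, hpre]
  rw [hY.measure_inter_preimage_eq_mul F (sets := fun v => {y v})
      (fun v _ => measurableSet_singleton _),
    hZ.measure_inter_preimage_eq_mul F (sets := fun v => {y v})
      (fun v _ => measurableSet_singleton _)]
  refine Finset.prod_congr rfl fun v _ => ?_
  rw [← Measure.map_apply (hYm v) (measurableSet_singleton _),
    ← Measure.map_apply (hZm v) (measurableSet_singleton _), hmarg v]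

/-- reindexing an independent family along an injection -/
lemma iIndepFun_comp (hindep : iIndepFun X μ)
    (φ : List ℕ → List ℕ) (hφ : Function.Injective φ) :
    iIndepFun (fun v => X (φ v)) μ := by
  rw [iIndepFun_iff_measure_inter_preimage_eq_mul]
  intro S sets hsets
  classical
  have key := hindep.measure_inter_preimage_eq_mul (S.image φ)
    (sets := fun w => sets (Function.invFun φ w))
    (fun w hw => hsets _ (by
      obtain ⟨v, hv, rfl⟩ := Finset.mem_image.1 hw
      rwa [Function.leftInverse_invFun hφ v]))
  have hinter : (⋂ w ∈ S.image φ, X w ⁻¹' sets (Function.invFun φ w))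
      = ⋂ v ∈ S, (fun ω => X (φ v) ω) ⁻¹' sets v := by
    ext ω
    simp only [Set.mem_iInter, Finset.mem_image]
    constructor
    · intro h v hv
      have := h (φ v) ⟨v, hv, rfl⟩
      rwa [Function.leftInverse_invFun hφ v] at this
    · rintro h w ⟨v, hv, rfl⟩
      rw [Function.leftInverse_invFun hφ v]
      exact h v hv
  have hprod : ∏ w ∈ S.image φ, μ (X w ⁻¹' sets (Function.invFun φ w))
      = ∏ v ∈ S, μ ((fun ω => X (φ v) ω) ⁻¹' sets v) := by
    rw [Finset.prod_image (fun a _ b _ h => hφ h)]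
    refine Finset.prod_congr rfl fun v _ => ?_
    rw [Function.leftInverse_invFun hφ v]
  rw [hinter, hprod] at key
  exact key

/-- the subtree configuration has the same law as the whole tree configuration -/
lemma map_fam_sub (hmeas : ∀ v, Measurable (X v))
    (hindep : iIndepFun X μ)
    (hident : ∀ v, μ.map (X v) = μ.map (X [])) (i : ℕ) :
    μ.map (fam (sub X i)) = μ.map (fam X) := by
  have hinj : Function.Injective (fun u : List ℕ => u ++ [i]) := by
    intro a b h
    simpa [← List.concat_eq_append, List.concat_inj] using h
  exact map_fam_eq (fun v => hmeas _) hmeas (iIndepFun_comp hindep _ hinj) hindep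
    (fun v => (hident _).trans (hident v).symm)

lemma Indep.mono' {m₁ m₂ m₁' m₂' : MeasurableSpace Ω}
    (h : Indep m₁ m₂ μ) (h1 : m₁' ≤ m₁) (h2 : m₂' ≤ m₂) : Indep m₁' m₂' μ := by
  rw [Indep_iff] at h ⊢
  exact fun t1 t2 ht1 ht2 => h t1 t2 (h1 _ ht1) (h2 _ ht2)

/-- block σ-algebra of subtree `i` -/
def blockSA (X : List ℕ → Ω → ℕ × ℕ) (i : ℕ) : MeasurableSpace Ω :=
  ⨆ u : List ℕ, MeasurableSpace.comap (X (u ++ [i])) inferInstance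

/-- σ-algebra of root together with the first k blocks -/
def rootBlocksSA (X : List ℕ → Ω → ℕ × ℕ) (k : ℕ) : MeasurableSpace Ω :=
  ⨆ v ∈ ({([] : List ℕ)} ∪ ⋃ i ∈ Set.Iio k, Set.range (fun u : List ℕ => u ++ [i])),
    MeasurableSpace.comap (X v) inferInstance

lemma comap_root_le_rootBlocks (k : ℕ) :
    MeasurableSpace.comap (X []) inferInstance ≤ rootBlocksSA X k := by
  unfold rootBlocksSA
  exact le_iSup₂_of_le ([] : List ℕ) (Set.mem_union_left _ rfl) le_rfl

lemma blockSA_le_rootBlocks {i k : ℕ} (hik : i < k) : blockSA X i ≤ rootBlocksSA X k := by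
  unfold rootBlocksSA blockSA
  refine iSup_le fun u => le_iSup₂_of_le (u ++ [i]) ?_ le_rfl
  exact Set.mem_union_right _ (Set.mem_biUnion (show i ∈ Set.Iio k from hik)
    (show u ++ [i] ∈ Set.range (fun u : List ℕ => u ++ [i]) from ⟨u, rfl⟩))

lemma blockSA_le (hmeas : ∀ v, Measurable (X v)) (i : ℕ) :
    blockSA X i ≤ (inferInstance : MeasurableSpace Ω) :=
  iSup_le fun u => measurable_iff_comap_le.1 (hmeas _)

lemma rootBlocksSA_le (hmeas : ∀ v, Measurable (X v)) (k : ℕ) :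
    rootBlocksSA X k ≤ (inferInstance : MeasurableSpace Ω) :=
  iSup_le fun v => iSup_le fun _ => measurable_iff_comap_le.1 (hmeas _)

lemma indep_rootBlocks_block (hmeas : ∀ v, Measurable (X v))
    (hindep : iIndepFun X μ) (k : ℕ) :
    Indep (rootBlocksSA X k) (blockSA X k) μ := by
  have h := indep_iSup_of_disjoint (m := fun v => MeasurableSpace.comap (X v) inferInstance)
    (fun v => measurable_iff_comap_le.1 (hmeas v))
    ((iIndepFun_iff_iIndep _ _ _).1 hindep)
    (S := {([] : List ℕ)} ∪ ⋃ i ∈ Set.Iio k, Set.range (fun u : List ℕ => u ++ [i]))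
    (T := Set.range (fun u : List ℕ => u ++ [k]))
    (by
      rw [Set.disjoint_right]
      rintro v ⟨u, rfl⟩ hv
      rcases hv with hv | hv
      · exact (List.concat_ne_nil k u) hv
      · simp only [Set.mem_iUnion, Set.mem_Iio] at hv
        obtain ⟨i, hi, u', hu'⟩ := hv
        simp only [← List.concat_eq_append, List.concat_inj] at hu'
        omega)
  have hT : (⨆ v ∈ Set.range (fun u : List ℕ => u ++ [k]),
      MeasurableSpace.comap (X v) inferInstance) = blockSA X k := by
    rw [iSup_range]
    rfl
  rw [hT] at h
  exact h

lemma measurable_fam_block (X : List ℕ → Ω → ℕ × ℕ) (i : ℕ) :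
    Measurable[blockSA X i] (fam (sub X i)) := by
  have h : ∀ u : List ℕ, Measurable[blockSA X i] (fun ω => fam (sub X i) ω u) := by
    intro u
    have h1 : Measurable[MeasurableSpace.comap (X (u ++ [i])) inferInstance] (X (u ++ [i])) :=
      fun s hs => ⟨s, hs, rfl⟩
    exact h1.mono (le_iSup (fun u : List ℕ =>
      MeasurableSpace.comap (X (u ++ [i])) inferInstance) u) le_rfl
  exact @measurable_pi_lambda Ω (List ℕ) (fun _ => ℕ × ℕ) (blockSA X i) _ _ h

/-- measurability of subtree functionals w.r.t. block σ-algebras -/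
lemma measurable_block_comp {G : Cfg → ℝ} (hG : Measurable G) (i : ℕ) :
    Measurable[blockSA X i] (fun ω => G (fam (sub X i) ω)) :=
  hG.comp (measurable_fam_block X i)

lemma measurable_root_comp {φ : ℕ × ℕ → ℝ} :
    Measurable[MeasurableSpace.comap (X []) inferInstance] (fun ω => φ (X [] ω)) := by
  have h : Measurable[MeasurableSpace.comap (X []) inferInstance] (X []) :=
    fun s hs => ⟨s, hs, rfl⟩
  exact (measurable_of_countable φ).comp h

/-- the workhorse: factorization of a product of root- and block-functionals -/
lemma integral_mul_blocks (hmeas : ∀ v, Measurable (X v))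
    (hindep : iIndepFun X μ)
    (k : ℕ) (h0 : Ω → ℝ) (g : ℕ → Ω → ℝ)
    (h0meas : Measurable[MeasurableSpace.comap (X []) inferInstance] h0)
    (h0bd : ∀ ω, |h0 ω| ≤ 1)
    (gmeas : ∀ i, Measurable[blockSA X i] (g i)) (gbd : ∀ i ω, |g i ω| ≤ 1) :
    ∫ ω, h0 ω * ∏ i ∈ Finset.range k, g i ω ∂μ
      = (∫ ω, h0 ω ∂μ) * ∏ i ∈ Finset.range k, ∫ ω, g i ω ∂μ := by
  induction k with
  | zero => simp
  | succ k ih =>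
      set f : Ω → ℝ := fun ω => h0 ω * ∏ i ∈ Finset.range k, g i ω with hf
      have hfmeasM : Measurable[rootBlocksSA X k] f := by
        have h0' : Measurable[rootBlocksSA X k] h0 :=
          h0meas.mono (comap_root_le_rootBlocks k) le_rfl
        have hg' : ∀ i ∈ Finset.range k, Measurable[rootBlocksSA X k] (g i) := fun i hi =>
          (gmeas i).mono (blockSA_le_rootBlocks (Finset.mem_range.1 hi)) le_rfl
        exact h0'.mul (Finset.measurable_prod _ hg')
      have hfmeas : Measurable f :=
        hfmeasM.mono (rootBlocksSA_le hmeas k) le_rfl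
      have hfbd : ∀ ω, |f ω| ≤ 1 := by
        intro ω
        rw [hf, abs_mul, Finset.abs_prod]
        calc |h0 ω| * ∏ i ∈ Finset.range k, |g i ω|
            ≤ 1 * 1 := by
              apply mul_le_mul (h0bd ω) (Finset.prod_le_one (fun i _ => abs_nonneg _)
                (fun i _ => gbd i ω)) (Finset.prod_nonneg fun i _ => abs_nonneg _) zero_le_one
          _ = 1 := by ring
      have hindepF : IndepFun f (g k) μ := by
        rw [IndepFun_iff_Indep]
        exact Indep.mono' (indep_rootBlocks_block hmeas hindep k)
          (measurable_iff_comap_le.1 hfmeasM) (measurable_iff_comap_le.1 (gmeas k))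
      have hfint : Integrable f μ :=
        Integrable.mono' (integrable_const 1) hfmeas.aestronglyMeasurable
          (Filter.Eventually.of_forall fun ω => by rw [Real.norm_eq_abs]; exact hfbd ω)
      have hgint : Integrable (g k) μ :=
        Integrable.mono' (integrable_const 1)
          ((gmeas k).mono (blockSA_le hmeas k) le_rfl).aestronglyMeasurable
          (Filter.Eventually.of_forall fun ω => by rw [Real.norm_eq_abs]; exact gbd k ω)
      have key := hindepF.integral_mul_eq_mul_integral hfint.aestronglyMeasurable hgint.aestronglyMeasurable
      have h1 : (fun ω => h0 ω * ∏ i ∈ Finset.range (k+1), g i ω) = f * g k := by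
        ext ω
        simp only [Pi.mul_apply]
        rw [hf, Finset.prod_range_succ]
        ring
      rw [h1, key, ih, Finset.prod_range_succ]
      ring

/-- the events version of the workhorse -/
lemma meas_inter_blocks (hmeas : ∀ v, Measurable (X v))
    (hindep : iIndepFun X μ)
    (k : ℕ) (T : Set (ℕ × ℕ)) (C : ℕ → Set Cfg) (hC : ∀ i, MeasurableSet (C i)) :
    μ ((X []) ⁻¹' T ∩ ⋂ i ∈ Finset.range k, fam (sub X i) ⁻¹' C i)
      = μ ((X []) ⁻¹' T) * ∏ i ∈ Finset.range k, μ (fam (sub X i) ⁻¹' C i) := by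
  induction k with
  | zero => simp
  | succ k ih =>
      have hTmeas : MeasurableSet[MeasurableSpace.comap (X []) inferInstance]
          ((X []) ⁻¹' T) := ⟨T, (Set.to_countable T).measurableSet, rfl⟩
      have hCmeasB : ∀ i, MeasurableSet[blockSA X i] (fam (sub X i) ⁻¹' C i) :=
        fun i => measurable_fam_block X i (hC i)
      have hSmeasM : MeasurableSet[rootBlocksSA X k]
          ((X []) ⁻¹' T ∩ ⋂ i ∈ Finset.range k, fam (sub X i) ⁻¹' C i) := by
        refine MeasurableSet.inter (comap_root_le_rootBlocks k _ hTmeas) ?_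
        refine MeasurableSet.biInter (Set.to_countable _) fun i hi => ?_
        exact blockSA_le_rootBlocks (Finset.mem_range.1 hi) _ (hCmeasB i)
      have hindepE := indep_rootBlocks_block hmeas hindep k
      rw [Indep_iff] at hindepE
      have key := hindepE _ _ hSmeasM (hCmeasB k)
      have h1 : (X []) ⁻¹' T ∩ ⋂ i ∈ Finset.range (k+1), fam (sub X i) ⁻¹' C i
          = ((X []) ⁻¹' T ∩ ⋂ i ∈ Finset.range k, fam (sub X i) ⁻¹' C i)
            ∩ fam (sub X k) ⁻¹' C k := by
        rw [Finset.range_add_one, Finset.set_biInter_insert]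
        ext ω
        simp only [Set.mem_inter_iff, Set.mem_iInter]
        tauto
      rw [h1, key, ih, Finset.range_add_one, Finset.prod_insert (by simp)]
      ring

end Measure



section Extinction

variable {Ω : Type*}

/-- the set of alive vertices at level `n` -/
def An (X : List ℕ → Ω → ℕ × ℕ) (n : ℕ) (ω : Ω) : Set (List ℕ) :=
  {v | v.length = n ∧ Alive X v ω}

lemma alive_drop {X : List ℕ → Ω × Unit → ℕ × ℕ} : True := trivial

lemma alive_drop' {X : List ℕ → Ω → ℕ × ℕ} {ω : Ω} :
    ∀ {v : List ℕ}, Alive X v ω → ∀ k, Alive X (v.drop k) ω := by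
  intro v
  induction v with
  | nil => intro h k; simpa using h
  | cons i u ih =>
      intro h k
      cases k with
      | zero => exact h
      | succ k => exact ih h.1 k

lemma an_finite {X : List ℕ → Ω → ℕ × ℕ} {ω : Ω} : ∀ n, (An X n ω).Finite
  | 0 => (Set.finite_singleton ([] : List ℕ)).subset
      (fun v hv => by simpa using List.length_eq_zero_iff.1 hv.1)
  | n + 1 => by
      have h : An X (n+1) ω ⊆ ⋃ u ∈ An X n ω, (fun i => i :: u) '' Set.Iio (X u ω).1 := by
        rintro v ⟨hlen, hal⟩
        cases v with
        | nil => simp at hlen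
        | cons i u =>
            refine Set.mem_biUnion (show u ∈ An X n ω from ⟨by simpa using hlen, hal.1⟩) ?_
            exact ⟨i, hal.2, rfl⟩
      exact ((an_finite n).biUnion (fun u _ => (Set.finite_Iio _).image _)).subset h

lemma an_empty_succ {X : List ℕ → Ω → ℕ × ℕ} {ω : Ω} {n : ℕ} (h : An X n ω = ∅) :
    An X (n+1) ω = ∅ := by
  rw [Set.eq_empty_iff_forall_notMem] at h ⊢
  rintro v ⟨hlen, hal⟩
  refine h (v.drop 1) ⟨?_, alive_drop' hal 1⟩
  rw [List.length_drop, hlen]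
  omega

lemma an_empty_mono {X : List ℕ → Ω → ℕ × ℕ} {ω : Ω} {n m : ℕ} (hnm : n ≤ m)
    (h : An X n ω = ∅) : An X m ω = ∅ := by
  induction m with
  | zero => exact (Nat.le_zero.1 hnm) ▸ h
  | succ m ih =>
      rcases Nat.lt_or_ge n (m+1) with hlt | hge
      · exact an_empty_succ (ih (by omega))
      · exact (by omega : n = m + 1) ▸ h

lemma treeFinite_of_an_empty {X : List ℕ → Ω → ℕ × ℕ} {ω : Ω} {n : ℕ}
    (h : An X n ω = ∅) : TreeFinite X ω := by
  have hsub : {v | Alive X v ω} ⊆ ⋃ m ∈ Set.Iio n, An X m ω := by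
    intro v hv
    rcases Nat.lt_or_ge v.length n with hlt | hge
    · exact Set.mem_biUnion hlt ⟨rfl, hv⟩
    · exfalso
      have h1 : v.drop (v.length - n) ∈ An X n ω := by
        refine ⟨?_, alive_drop' hv _⟩
        rw [List.length_drop]
        omega
      rw [h] at h1
      exact h1
  exact (Set.Finite.biUnion (Set.finite_Iio n) (fun m _ => an_finite m)).subset hsub

lemma an_congr {Ω' : Type*} {X : List ℕ → Ω → ℕ × ℕ} {X' : List ℕ → Ω' → ℕ × ℕ}
    {ω : Ω} {ω' : Ω'} (h : ∀ u, X u ω = X' u ω') (n : ℕ) : An X n ω = An X' n ω' := by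
  ext v
  exact and_congr Iff.rfl (alive_congr h v)

lemma an_succ_empty_iff {X : List ℕ → Ω → ℕ × ℕ} {ω : Ω} {n : ℕ} :
    An X (n+1) ω = ∅ ↔ ∀ i < (X [] ω).1, An (sub X i) n ω = ∅ := by
  constructor
  · intro h i hi
    rw [Set.eq_empty_iff_forall_notMem] at h ⊢
    rintro u ⟨hlen, hal⟩
    refine h (u ++ [i]) ⟨by simp [hlen], (alive_append u).2 ⟨hi, hal⟩⟩
  · intro h
    rw [Set.eq_empty_iff_forall_notMem]
    rintro v ⟨hlen, hal⟩
    rcases List.eq_nil_or_concat v with rfl | ⟨u, i, rfl⟩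
    · simp at hlen
    · rw [List.concat_eq_append] at *
      obtain ⟨hi, hu⟩ := (alive_append u).1 hal
      have hlen' : u.length = n := by simpa using hlen
      have := h i hi
      rw [Set.eq_empty_iff_forall_notMem] at this
      exact this u ⟨hlen', hu⟩

/-- level-`n`-extinct configurations -/
def CnE (n : ℕ) : Set Cfg := {x : Cfg | An E n x = ∅}

lemma measurableSet_CnE (n : ℕ) : MeasurableSet (CnE n) := by
  have h : CnE n = ⋂ v : List ℕ, {x : Cfg | v.length = n → ¬ Alive E v x} := by
    ext x
    simp only [CnE, Set.mem_setOf_eq, Set.eq_empty_iff_forall_notMem, Set.mem_iInter, An]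
    constructor
    · intro h v hv hal; exact h v ⟨hv, hal⟩
    · rintro h v ⟨hv, hal⟩; exact h v hv hal
  rw [h]
  refine MeasurableSet.iInter fun v => ?_
  by_cases hv : v.length = n
  · have : {x : Cfg | v.length = n → ¬ Alive E v x} = {x : Cfg | Alive E v x}ᶜ := by
      ext x; simp [hv]
    rw [this]
    exact (measurableSet_alive v).compl
  · have : {x : Cfg | v.length = n → ¬ Alive E v x} = Set.univ := by
      ext x; simp [hv]
    rw [this]
    exact MeasurableSet.univ

lemma mem_CnE_iff {X : List ℕ → Ω → ℕ × ℕ} {ω : Ω} {n : ℕ} :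
    fam X ω ∈ CnE n ↔ An X n ω = ∅ := by
  have h := an_congr (X := X) (X' := E) (ω := ω) (ω' := fam X ω) (fun u => rfl) n
  simp only [CnE, Set.mem_setOf_eq, ← h]

lemma CnE_mono {n : ℕ} : CnE n ⊆ CnE (n+1) := fun x hx => an_empty_succ hx

section Meas

variable [MeasurableSpace Ω] {μ : Measure Ω} [IsProbabilityMeasure μ]
variable {X : List ℕ → Ω → ℕ × ℕ}

/-- the one-step recursion for extinction probabilities -/
lemma meas_CnE_succ (hmeas : ∀ v, Measurable (X v))
    (hindep : iIndepFun X μ)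
    (hident : ∀ v, μ.map (X v) = μ.map (X [])) (n : ℕ) :
    μ (fam X ⁻¹' CnE (n+1))
      = ∑' p : ℕ × ℕ, μ ((X []) ⁻¹' {p}) * (μ (fam X ⁻¹' CnE n)) ^ p.1 := by
  have hdecomp : fam X ⁻¹' CnE (n+1)
      = ⋃ p : ℕ × ℕ, ((X []) ⁻¹' {p} ∩ ⋂ i ∈ Finset.range p.1, fam (sub X i) ⁻¹' CnE n) := by
    ext ω
    simp only [Set.mem_preimage, Set.mem_iUnion, Set.mem_inter_iff, Set.mem_iInter,
      Set.mem_singleton_iff, Finset.mem_range]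
    rw [mem_CnE_iff, an_succ_empty_iff]
    constructor
    · intro h
      exact ⟨X [] ω, rfl, fun i hi => mem_CnE_iff.2 (h i hi)⟩
    · rintro ⟨p, rfl, h⟩ i hi
      exact mem_CnE_iff.1 (h i hi)
  have hblocks : ∀ i, μ (fam (sub X i) ⁻¹' CnE n) = μ (fam X ⁻¹' CnE n) := by
    intro i
    rw [← Measure.map_apply (measurable_fam (X := sub X i) (fun v => hmeas _))
        (measurableSet_CnE n),
      ← Measure.map_apply (measurable_fam hmeas) (measurableSet_CnE n),
      map_fam_sub hmeas hindep hident i]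
  have hmeasSet : ∀ p : ℕ × ℕ, MeasurableSet
      ((X []) ⁻¹' {p} ∩ ⋂ i ∈ Finset.range p.1, fam (sub X i) ⁻¹' CnE n) := by
    intro p
    refine ((hmeas []) (measurableSet_singleton p)).inter ?_
    exact MeasurableSet.biInter (Set.to_countable _)
      (fun i _ => measurable_fam (X := sub X i) (fun v => hmeas _) (measurableSet_CnE n))
  have hdisj : Pairwise (Function.onFun Disjoint (fun p : ℕ × ℕ =>
      (X []) ⁻¹' {p} ∩ ⋂ i ∈ Finset.range p.1, fam (sub X i) ⁻¹' CnE n)) := by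
    intro p q hpq
    refine Set.disjoint_left.2 ?_
    rintro ω ⟨hp, -⟩ ⟨hq, -⟩
    exact hpq (hp.symm.trans hq)
  rw [hdecomp, measure_iUnion hdisj hmeasSet]
  congr 1
  ext p
  rw [meas_inter_blocks hmeas hindep p.1 {p} (fun _ => CnE n) (fun _ => measurableSet_CnE n)]
  congr 1
  rw [Finset.prod_congr rfl (fun i _ => hblocks i), Finset.prod_const, Finset.card_range]

end Meas

end Extinction


section Analytic

lemma pow_tangent (k : ℕ) {s : ℝ} (h0 : 0 ≤ s) (h1 : s ≤ 1) :
    1 + (k : ℝ) * (s - 1) ≤ s ^ k := by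
  induction k with
  | zero => norm_num
  | succ k ih =>
      have hp : (0:ℝ) ≤ s ^ k := pow_nonneg h0 k
      rw [pow_succ]
      push_cast
      push_cast at ih
      nlinarith [mul_le_mul_of_nonneg_right ih h0,
        mul_nonneg (Nat.cast_nonneg (α := ℝ) k) (sq_nonneg (s-1))]

lemma pow_tangent2 (k : ℕ) (hk : 2 ≤ k) {s : ℝ} (h0 : 0 ≤ s) (h1 : s ≤ 1) :
    1 + (k : ℝ) * (s - 1) + (1 - s)^2 ≤ s ^ k := by
  induction k, hk using Nat.le_induction with
  | base => push_cast; nlinarith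
  | succ k hk ih =>
      have hp : (0:ℝ) ≤ s ^ k := pow_nonneg h0 k
      have hs : s ^ (k+1) = s ^ k * s := pow_succ s k
      have hkey : 0 ≤ (1-s)^2 * ((k:ℝ) - 1 + s) := by
        refine mul_nonneg (sq_nonneg _) ?_
        have : (2:ℝ) ≤ (k:ℝ) := by exact_mod_cast hk
        linarith
      have hA := mul_le_mul_of_nonneg_right ih h0
      push_cast
      push_cast at hA
      nlinarith [hA, hkey, hs, hp]

variable {Ω : Type*} [MeasurableSpace Ω] {μ : Measure Ω} [IsProbabilityMeasure μ]
variable {X : List ℕ → Ω → ℕ × ℕ}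

lemma integral_comp_root (hmeas0 : Measurable (X [])) (φ : ℕ × ℕ → ℝ) (C : ℝ)
    (hb : ∀ p, |φ p| ≤ C) :
    ∫ ω, φ (X [] ω) ∂μ = ∑' p : ℕ × ℕ, (μ ((X []) ⁻¹' {p})).toReal * φ p := by
  have hprob : IsProbabilityMeasure (μ.map (X [])) :=
    Measure.isProbabilityMeasure_map hmeas0.aemeasurable
  have hint : Integrable φ (μ.map (X [])) :=
    Integrable.mono' (integrable_const C) (measurable_of_countable φ).aestronglyMeasurable
      (Filter.Eventually.of_forall fun p => by rw [Real.norm_eq_abs]; exact hb p)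
  rw [← integral_map hmeas0.aemeasurable (measurable_of_countable φ).aestronglyMeasurable,
    integral_countable' hint]
  exact tsum_congr fun p => by
    rw [measureReal_def, Measure.map_apply hmeas0 (measurableSet_singleton p), smul_eq_mul]

/-- the pgf of the offspring is strictly above the diagonal on [0,1) -/
lemma pgf_gt (hmeas : ∀ v, Measurable (X v))
    (hmean : ∫ ω, ((X [] ω).1 : ℝ) ∂μ = 1)
    (hnondeg : μ {ω | (X [] ω).1 = 1} < 1)
    {s : ℝ} (h0 : 0 ≤ s) (h1 : s < 1) :
    s < ∫ ω, s ^ (X [] ω).1 ∂μ := by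
  have hint_ξ : Integrable (fun ω => ((X [] ω).1 : ℝ)) μ := by
    by_contra h
    exact one_ne_zero (hmean.symm.trans (integral_undef h))
  have hmeasA : MeasurableSet {ω | 2 ≤ (X [] ω).1} := by
    have : {ω | 2 ≤ (X [] ω).1} = (X []) ⁻¹' {p : ℕ × ℕ | 2 ≤ p.1} := rfl
    rw [this]
    exact (hmeas []) ((Set.to_countable _).measurableSet)
  have hmeasB : MeasurableSet {ω | (X [] ω).1 = 1} := by
    have : {ω | (X [] ω).1 = 1} = (X []) ⁻¹' {p : ℕ × ℕ | p.1 = 1} := rfl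
    rw [this]
    exact (hmeas []) ((Set.to_countable _).measurableSet)
  have hspow_int : Integrable (fun ω => s ^ (X [] ω).1) μ := by
    refine Integrable.mono' (integrable_const 1) ?_ ?_
    · exact ((measurable_of_countable (fun p : ℕ × ℕ => s ^ p.1)).comp
        (hmeas [])).aestronglyMeasurable
    · exact Filter.Eventually.of_forall fun ω => by
        rw [Real.norm_eq_abs, abs_pow, abs_of_nonneg h0]
        exact pow_le_one₀ h0 h1.le
  have hA_pos : μ {ω | 2 ≤ (X [] ω).1} ≠ 0 := by
    intro hzero
    have hae : ∀ᵐ ω ∂μ, (X [] ω).1 < 2 := by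
      rw [ae_iff]
      convert hzero using 2
      ext ω
      simp
      constructor <;> intro h <;> omega
    have heq : (fun ω => ((X [] ω).1 : ℝ))
        =ᵐ[μ] {ω | (X [] ω).1 = 1}.indicator (fun _ => (1:ℝ)) := by
      filter_upwards [hae] with ω hω
      rcases (by omega : (X [] ω).1 = 0 ∨ (X [] ω).1 = 1) with h | h
      · rw [h, Set.indicator_of_notMem (by simp [h])]
        norm_num
      · rw [h, Set.indicator_of_mem (by simp [h])]
        norm_num
    rw [integral_congr_ae heq, integral_indicator_const _ hmeasB] at hmean
    have hlt : (μ {ω | (X [] ω).1 = 1}).toReal < 1 := by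
      have := (ENNReal.toReal_lt_toReal (measure_ne_top μ _) (by norm_num)).2 hnondeg
      simpa using this
    rw [smul_eq_mul, mul_one] at hmean
    exact absurd hmean (ne_of_lt hlt)
  -- pointwise bound
  have key : ∀ ω, {ω | 2 ≤ (X [] ω).1}.indicator (fun _ => (1-s)^2) ω
      ≤ s ^ (X [] ω).1 - (1 + ((X [] ω).1 : ℝ) * (s - 1)) := by
    intro ω
    by_cases hω : ω ∈ {ω | 2 ≤ (X [] ω).1}
    · rw [Set.indicator_of_mem hω]
      have := pow_tangent2 _ hω h0 h1.le
      linarith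
    · rw [Set.indicator_of_notMem hω]
      have := pow_tangent (X [] ω).1 h0 h1.le
      linarith
  have hind_int : Integrable ({ω | 2 ≤ (X [] ω).1}.indicator (fun _ => (1-s)^2)) μ :=
    (integrable_const ((1-s)^2)).indicator hmeasA
  have haffine_int : Integrable (fun ω => 1 + ((X [] ω).1 : ℝ) * (s - 1)) μ :=
    (integrable_const 1).add (hint_ξ.mul_const (s-1))
  have hIl : ∫ ω, {ω | 2 ≤ (X [] ω).1}.indicator (fun _ => (1-s)^2) ω ∂μ
      ≤ ∫ ω, (s ^ (X [] ω).1 - (1 + ((X [] ω).1 : ℝ) * (s - 1))) ∂μ :=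
    integral_mono hind_int (hspow_int.sub haffine_int) key
  rw [integral_sub hspow_int haffine_int, integral_add (integrable_const 1)
    (hint_ξ.mul_const (s-1)), integral_const, integral_mul_const, hmean,
    integral_indicator_const _ hmeasA] at hIl
  have hpos : 0 < (μ {ω | 2 ≤ (X [] ω).1}).toReal :=
    ENNReal.toReal_pos hA_pos (measure_ne_top μ _)
  have h1s : 0 < (1-s)^2 := pow_pos (by linarith) 2
  simp only [measureReal_def, smul_eq_mul, measure_univ, ENNReal.toReal_one, one_mul] at hIl
  nlinarith [mul_pos hpos h1s]

/-- almost sure extinction -/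
theorem ae_treeFinite (hmeas : ∀ v, Measurable (X v))
    (hindep : iIndepFun X μ)
    (hident : ∀ v, μ.map (X v) = μ.map (X []))
    (hmean : ∫ ω, ((X [] ω).1 : ℝ) ∂μ = 1)
    (hnondeg : μ {ω | (X [] ω).1 = 1} < 1) :
    ∀ᵐ ω ∂μ, TreeFinite X ω := by
  set q : ℕ → ENNReal := fun n => μ (fam X ⁻¹' CnE n) with hq
  set r : ℕ → ℝ := fun n => (q n).toReal with hr
  have hq_ne : ∀ n, q n ≠ ⊤ := fun n => measure_ne_top μ _
  have hq_le : ∀ n, q n ≤ 1 := fun n => prob_le_one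
  have hr0 : ∀ n, 0 ≤ r n := fun n => ENNReal.toReal_nonneg
  have hr1 : ∀ n, r n ≤ 1 := fun n => by
    have := ENNReal.toReal_mono (by norm_num) (hq_le n)
    simpa using this
  have hrmono : Monotone r := by
    apply monotone_nat_of_le_succ
    intro n
    exact ENNReal.toReal_mono (hq_ne _) (measure_mono (Set.preimage_mono CnE_mono))
  -- the recursion
  have hrec : ∀ n, r (n+1) = ∑' p : ℕ × ℕ, (μ ((X []) ⁻¹' {p})).toReal * (r n) ^ p.1 := by
    intro n
    rw [hr]
    simp only [hq]
    rw [meas_CnE_succ hmeas hindep hident n]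
    rw [ENNReal.tsum_toReal_eq (fun p => ENNReal.mul_ne_top (measure_ne_top μ _)
      (ENNReal.pow_ne_top (hq_ne n)))]
    exact tsum_congr fun p => by rw [ENNReal.toReal_mul, ENNReal.toReal_pow]
  set g : ℝ → ℝ := fun s => ∫ ω, s ^ (X [] ω).1 ∂μ with hgdef
  have hg : ∀ s : ℝ, 0 ≤ s → s ≤ 1 →
      g s = ∑' p : ℕ × ℕ, (μ ((X []) ⁻¹' {p})).toReal * s ^ p.1 := by
    intro s h0 h1
    exact integral_comp_root (hmeas []) (fun p => s ^ p.1) 1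
      (fun p => by rw [abs_pow, abs_of_nonneg h0]; exact pow_le_one₀ h0 h1)
  have hrec' : ∀ n, r (n+1) = g (r n) := fun n => by
    rw [hrec n, hg (r n) (hr0 n) (hr1 n)]
  -- the limit
  have hbdd : BddAbove (Set.range r) := ⟨1, by rintro x ⟨n, rfl⟩; exact hr1 n⟩
  set L : ℝ := ⨆ n, r n with hL
  have htend : Filter.Tendsto r Filter.atTop (nhds L) := tendsto_atTop_ciSup hrmono hbdd
  have hL1 : L ≤ 1 := ciSup_le hr1
  have hL0 : 0 ≤ L := le_trans (hr0 0) (le_ciSup hbdd 0)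
  -- continuity along the sequence
  have htendg : Filter.Tendsto (fun n => g (r n)) Filter.atTop (nhds (g L)) := by
    refine tendsto_integral_of_dominated_convergence (fun _ => (1:ℝ)) ?_ ?_ ?_ ?_
    · intro n
      exact ((measurable_of_countable (fun p : ℕ × ℕ => (r n) ^ p.1)).comp
        (hmeas [])).aestronglyMeasurable
    · exact integrable_const 1
    · intro n
      refine Filter.Eventually.of_forall fun ω => ?_
      rw [Real.norm_eq_abs, abs_pow, abs_of_nonneg (hr0 n)]
      exact pow_le_one₀ (hr0 n) (hr1 n)
    · exact Filter.Eventually.of_forall fun ω => htend.pow _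
  have htend' : Filter.Tendsto (fun n => r (n+1)) Filter.atTop (nhds L) :=
    htend.comp (Filter.tendsto_add_atTop_nat 1)
  have hfix : g L = L := by
    refine tendsto_nhds_unique ?_ htend'
    simp only [hrec']
    exact htendg
  have hLeq1 : L = 1 := by
    by_contra hne
    have hlt : L < 1 := lt_of_le_of_ne hL1 hne
    have h2 : L < g L := pgf_gt hmeas hmean hnondeg hL0 hlt
    rw [hfix] at h2
    exact lt_irrefl L h2
  -- conclude
  set U : Set Ω := ⋃ n, fam X ⁻¹' CnE n with hU
  have hUmeas : MeasurableSet U :=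
    MeasurableSet.iUnion fun n => measurable_fam hmeas (measurableSet_CnE n)
  have hU1 : μ U = 1 := by
    have hsub : ∀ n, fam X ⁻¹' CnE n ⊆ U := fun n => by
      rw [hU]
      exact Set.subset_iUnion (fun n => fam X ⁻¹' CnE n) n
    have hle : ∀ n, r n ≤ (μ U).toReal := fun n =>
      ENNReal.toReal_mono (measure_ne_top μ _) (measure_mono (hsub n))
    have h1le : (1:ℝ) ≤ (μ U).toReal := hLeq1 ▸ ciSup_le hle
    have hle1 : (μ U).toReal ≤ 1 := by
      have := ENNReal.toReal_mono (by norm_num) (prob_le_one (μ := μ) (s := U))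
      simpa using this
    have : (μ U).toReal = 1 := le_antisymm hle1 h1le
    rw [← ENNReal.ofReal_toReal (measure_ne_top μ U), this]
    simp
  have hcompl : μ Uᶜ = 0 := by
    rw [measure_compl hUmeas (measure_ne_top μ U), hU1, measure_univ, tsub_self]
  rw [ae_iff]
  refine measure_mono_null ?_ hcompl
  intro ω hω
  simp only [Set.mem_setOf_eq] at hω
  simp only [Set.mem_compl_iff, hU, Set.mem_iUnion, Set.mem_preimage, not_exists]
  intro n hn
  exact hω (treeFinite_of_an_empty (mem_CnE_iff.1 hn))

end Analytic

end GWaux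


open GWaux in
/-- The probability generating function of the number of leaves `Z` of a critical
sesqui-type Galton–Watson tree satisfies
`Z(z) = P((ξ,ζ) = (0,0))·(z - 1) + f(Z(z), z)` for `z ∈ [0,1]`, where
`f(z, w) = E[z^ξ w^ζ]`. -/
theorem leaf_pgf_equation {Ω : Type*} [MeasurableSpace Ω]
    (μ : Measure Ω) [IsProbabilityMeasure μ]
    (X : List ℕ → Ω → ℕ × ℕ)
    (hmeas : ∀ v, Measurable (X v))
    (hindep : iIndepFun X μ)
    (hident : ∀ v, μ.map (X v) = μ.map (X []))
    (hmean : ∫ ω, ((X [] ω).1 : ℝ) ∂μ = 1)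
    (hnondeg : μ {ω | (X [] ω).1 = 1} < 1)
    (hexp : ∃ ε : ℝ, 0 < ε ∧
      Integrable (fun ω => (1 + ε) ^ ((X [] ω).1 + (X [] ω).2)) μ) :
    ∀ z : ℝ, 0 ≤ z → z ≤ 1 →
      (∫ ω, z ^ leafCount X ω ∂μ) =
        (μ {ω | X [] ω = (0, 0)}).toReal * (z - 1) +
          ∫ ω, (∫ ω', z ^ leafCount X ω' ∂μ) ^ (X [] ω).1 * z ^ (X [] ω).2 ∂μ := by
  intro z hz0 hz1
  classical
  set G : Cfg → ℝ := fun x => z ^ leafCount E x with hG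
  have hGmeas : Measurable G :=
    (measurable_of_countable (fun n : ℕ => z ^ n)).comp measurable_leafCountE
  have hf_eq : (fun ω => z ^ leafCount X ω) = fun ω => G (fam X ω) := by
    funext ω
    rw [hG]
    simp only
    rw [leafCount_fam X ω]
    rfl
  have hfmeas : Measurable (fun ω => z ^ leafCount X ω) := by
    rw [hf_eq]; exact hGmeas.comp (measurable_fam hmeas)
  have hfbd : ∀ (Y : List ℕ → Ω → ℕ × ℕ) (ω : Ω), |z ^ leafCount Y ω| ≤ 1 := by
    intro Y ω
    rw [abs_pow, abs_of_nonneg hz0]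
    exact pow_le_one₀ hz0 hz1
  have hfint : Integrable (fun ω => z ^ leafCount X ω) μ :=
    Integrable.mono' (integrable_const 1) hfmeas.aestronglyMeasurable
      (Filter.Eventually.of_forall fun ω => by rw [Real.norm_eq_abs]; exact hfbd X ω)
  set Zz : ℝ := ∫ ω, z ^ leafCount X ω ∂μ with hZz
  have hZz0 : 0 ≤ Zz := integral_nonneg (fun ω => pow_nonneg hz0 _)
  have hZz1 : Zz ≤ 1 := by
    rw [hZz]
    calc ∫ ω, z ^ leafCount X ω ∂μ ≤ ∫ _ω, (1:ℝ) ∂μ :=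
          integral_mono hfint (integrable_const 1) (fun ω => pow_le_one₀ hz0 hz1)
      _ = 1 := by simp
  -- the subtree functionals
  set g : ℕ → Ω → ℝ := fun i ω => z ^ leafCount (sub X i) ω with hg
  have hgi_eq : ∀ i, g i = fun ω => G (fam (sub X i) ω) := by
    intro i
    funext ω
    rw [hg, hG]
    simp only
    rw [leafCount_fam (sub X i) ω]
    rfl
  have hgblock : ∀ i, Measurable[blockSA X i] (g i) := by
    intro i
    rw [hgi_eq i]
    exact measurable_block_comp hGmeas i
  have hgbd : ∀ i ω, |g i ω| ≤ 1 := fun i ω => hfbd (sub X i) ω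
  have hgint_eq : ∀ i, ∫ ω, g i ω ∂μ = Zz := by
    intro i
    rw [hgi_eq i,
      ← integral_map (measurable_fam (X := sub X i) (fun v => hmeas _)).aemeasurable
        hGmeas.aestronglyMeasurable,
      map_fam_sub hmeas hindep hident i,
      integral_map (measurable_fam hmeas).aemeasurable hGmeas.aestronglyMeasurable,
      hZz, hf_eq]
  -- fibers
  have hmeasEp : ∀ p : ℕ × ℕ, MeasurableSet ((X []) ⁻¹' {p}) :=
    fun p => (hmeas []) (measurableSet_singleton p)
  have hdisj : Pairwise (Function.onFun Disjoint (fun p : ℕ × ℕ => (X []) ⁻¹' {p})) := by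
    intro p q hpq
    refine Set.disjoint_left.2 ?_
    rintro ω hp hq
    exact hpq ((Set.mem_singleton_iff.1 hp).symm.trans (Set.mem_singleton_iff.1 hq))
  have hcover : (⋃ p : ℕ × ℕ, (X []) ⁻¹' {p}) = Set.univ := by
    ext ω; simp
  have hfib : ∀ p : ℕ × ℕ, ∫ ω in (X []) ⁻¹' {p}, z ^ leafCount X ω ∂μ
      = ((if p = (0,0) then z else 1) * z ^ p.2)
        * ((μ ((X []) ⁻¹' {p})).toReal * Zz ^ p.1) := by
    intro p
    have hae : ∀ᵐ ω ∂μ, ω ∈ (X []) ⁻¹' {p} → z ^ leafCount X ω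
        = ((if p = (0,0) then z else 1) * z ^ p.2) * ∏ i ∈ Finset.range p.1, g i ω := by
      filter_upwards [ae_treeFinite hmeas hindep hident hmean hnondeg] with ω hfin hmem
      have hXp : X [] ω = p := hmem
      rw [leafCount_decomp hfin, hXp, pow_add, pow_add]
      have h1 : z ^ (if p = (0,0) then 1 else 0) = (if p = (0,0) then z else 1) := by
        by_cases hp : p = (0,0) <;> simp [hp]
      have h2 : ∏ i ∈ Finset.range p.1, g i ω
          = z ^ (∑ i ∈ Finset.range p.1, leafCount (sub X i) ω) := by
        rw [hg]
        exact Finset.prod_pow_eq_pow_sum _ _ _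
      rw [h1, h2]
    rw [setIntegral_congr_ae (hmeasEp p) hae]
    rw [integral_const_mul]
    congr 1
    -- factorize
    have hindic : (((X []) ⁻¹' {p}).indicator
          (fun ω => ∏ i ∈ Finset.range p.1, g i ω))
        = fun ω => (((X []) ⁻¹' {p}).indicator (fun _ => (1:ℝ)) ω)
            * ∏ i ∈ Finset.range p.1, g i ω := by
      funext ω
      by_cases hω : ω ∈ (X []) ⁻¹' {p} <;> simp [hω]
    have h0meas : Measurable[MeasurableSpace.comap (X []) inferInstance]
        (((X []) ⁻¹' {p}).indicator (fun _ => (1:ℝ))) := by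
      have heq : (((X []) ⁻¹' {p}).indicator (fun _ => (1:ℝ)))
          = fun ω => (fun q : ℕ × ℕ => if q = p then (1:ℝ) else 0) (X [] ω) := by
        funext ω
        simp [Set.indicator_apply, Set.mem_preimage]
      rw [heq]
      exact measurable_root_comp (X := X) (φ := fun q => if q = p then (1:ℝ) else 0)
    have h0bd : ∀ ω, |((X []) ⁻¹' {p}).indicator (fun _ => (1:ℝ)) ω| ≤ 1 := by
      intro ω
      by_cases hω : ω ∈ (X []) ⁻¹' {p} <;> simp [hω]
    rw [← integral_indicator (hmeasEp p), hindic,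
      integral_mul_blocks hmeas hindep p.1 _ g h0meas h0bd hgblock hgbd,
      integral_indicator_const _ (hmeasEp p),
      Finset.prod_congr rfl (fun i _ => hgint_eq i), Finset.prod_const, Finset.card_range]
    simp [mul_comm, measureReal_def]
  -- partition of the integral
  have hpart : ∫ ω, z ^ leafCount X ω ∂μ
      = ∑' p : ℕ × ℕ, ∫ ω in (X []) ⁻¹' {p}, z ^ leafCount X ω ∂μ := by
    have h1 : ∫ ω, z ^ leafCount X ω ∂μ
        = ∫ ω in (⋃ p : ℕ × ℕ, (X []) ⁻¹' {p}), z ^ leafCount X ω ∂μ := by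
      rw [hcover]
      exact setIntegral_univ.symm
    rw [h1]
    exact integral_iUnion hmeasEp hdisj hfint.integrableOn
  -- the right-hand side
  have hRHS : ∫ ω, Zz ^ (X [] ω).1 * z ^ (X [] ω).2 ∂μ
      = ∑' p : ℕ × ℕ, (μ ((X []) ⁻¹' {p})).toReal * (Zz ^ p.1 * z ^ p.2) := by
    refine integral_comp_root (hmeas []) (fun p => Zz ^ p.1 * z ^ p.2) 1 ?_
    intro p
    rw [abs_mul, abs_pow, abs_pow, abs_of_nonneg hz0, abs_of_nonneg hZz0]
    exact mul_le_one₀ (pow_le_one₀ hZz0 hZz1) (pow_nonneg hz0 _) (pow_le_one₀ hz0 hz1)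
  -- summability
  have hsummu : Summable (fun p : ℕ × ℕ => (μ ((X []) ⁻¹' {p})).toReal) := by
    apply ENNReal.summable_toReal
    rw [← measure_iUnion hdisj hmeasEp, hcover]
    simp
  have hsumB : Summable (fun p : ℕ × ℕ =>
      (μ ((X []) ⁻¹' {p})).toReal * (Zz ^ p.1 * z ^ p.2)) := by
    refine Summable.of_nonneg_of_le ?_ ?_ hsummu
    · intro p
      exact mul_nonneg ENNReal.toReal_nonneg
        (mul_nonneg (pow_nonneg hZz0 _) (pow_nonneg hz0 _))
    · intro p
      calc (μ ((X []) ⁻¹' {p})).toReal * (Zz ^ p.1 * z ^ p.2)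
          ≤ (μ ((X []) ⁻¹' {p})).toReal * 1 := by
            refine mul_le_mul_of_nonneg_left ?_ ENNReal.toReal_nonneg
            exact mul_le_one₀ (pow_le_one₀ hZz0 hZz1) (pow_nonneg hz0 _) (pow_le_one₀ hz0 hz1)
        _ = (μ ((X []) ⁻¹' {p})).toReal := mul_one _
  have hsumIte : Summable (fun p : ℕ × ℕ =>
      if p = ((0,0) : ℕ × ℕ) then (μ ((X []) ⁻¹' {((0,0) : ℕ × ℕ)})).toReal * (z - 1) else 0) := by
    refine summable_of_ne_finset_zero (s := {((0,0) : ℕ × ℕ)}) ?_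
    intro p hp
    rw [if_neg (by simpa using hp)]
  -- termwise identity
  have hterm : ∀ p : ℕ × ℕ,
      ((if p = (0,0) then z else 1) * z ^ p.2) * ((μ ((X []) ⁻¹' {p})).toReal * Zz ^ p.1)
      = (μ ((X []) ⁻¹' {p})).toReal * (Zz ^ p.1 * z ^ p.2)
        + (if p = ((0,0) : ℕ × ℕ) then (μ ((X []) ⁻¹' {((0,0) : ℕ × ℕ)})).toReal * (z - 1)
            else 0) := by
    intro p
    by_cases hp : p = (0,0)
    · subst hp
      have e1 : ((0,0) : ℕ × ℕ).1 = 0 := rfl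
      have e2 : ((0,0) : ℕ × ℕ).2 = 0 := rfl
      rw [if_pos rfl, if_pos rfl, e1, e2]
      ring
    · rw [if_neg hp, if_neg hp]
      ring
  have hset00 : {ω | X [] ω = (0, 0)} = (X []) ⁻¹' {((0,0) : ℕ × ℕ)} := rfl
  conv_lhs => rw [hZz]
  rw [hpart, tsum_congr hfib, tsum_congr hterm, Summable.tsum_add hsumB hsumIte, tsum_ite_eq,
    hset00, ← hRHS]
  ring
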